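/- Every permutation snark has a proper (Z_4 × Z_2)-coloring. -/

import Mathlib

open SimpleGraph

variable {V : Type*}

/-- A cubic graph: every vertex has exactly `3` neighbours. -/
def IsCubic (G : SimpleGraph V) : Prop :=
  ∀ v : V, (G.neighborSet v).ncard = 3

/-- Two edges (as elements of `Sym2 V`) are adjacent if they are distinct and
share an endpoint. -/
def EdgesAdj (e₁ e₂ : Sym2 V) : Prop :=
  e₁ ≠ e₂ ∧ ∃ v : V, v ∈ e₁ ∧ v ∈ e₂

/-- `G` has a proper `3`-edge-coloring. -/
def HasProper3EdgeColoring (G : SimpleGraph V) : Prop :=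
  ∃ c : Sym2 V → Fin 3,
    ∀ e₁ ∈ G.edgeSet, ∀ e₂ ∈ G.edgeSet, EdgesAdj e₁ e₂ → c e₁ ≠ c e₂

/-- A bridgeless graph: no edge is a bridge. -/
def IsBridgeless (G : SimpleGraph V) : Prop :=
  ∀ e ∈ G.edgeSet, ¬ G.IsBridge e

/-- A snark: a connected bridgeless cubic graph admitting no proper
`3`-edge-coloring. -/
def IsSnark (G : SimpleGraph V) : Prop :=
  G.Connected ∧ IsBridgeless G ∧ IsCubic G ∧ ¬ HasProper3EdgeColoring G

/-- A proper abelian coloring of `G` by the abelian group `A`: every edge gets a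
nonzero color, adjacent edges get distinct colors, and at every vertex the
colors of the incident edges sum to zero. -/
def IsProperAbelianColoring {A : Type*} [AddCommGroup A]
    (G : SimpleGraph V) (σ : Sym2 V → A) : Prop :=
  (∀ e ∈ G.edgeSet, σ e ≠ 0) ∧
  (∀ e₁ ∈ G.edgeSet, ∀ e₂ ∈ G.edgeSet, EdgesAdj e₁ e₂ → σ e₁ ≠ σ e₂) ∧
  (∀ v : V, ∑ᶠ e ∈ G.incidenceSet v, σ e = 0)

/-- `F` is a `2`-factor of `G`: a spanning `2`-regular subgraph. -/
def IsTwoFactor (G F : SimpleGraph V) : Prop :=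
  F ≤ G ∧ ∀ v : V, (F.neighborSet v).ncard = 2

/-- `M` is a matching contained in the edge set of `F`. -/
def IsMatchingIn (M : Set (Sym2 V)) (F : SimpleGraph V) : Prop :=
  M ⊆ F.edgeSet ∧ ∀ e₁ ∈ M, ∀ e₂ ∈ M, e₁ ≠ e₂ → ¬ ∃ v : V, v ∈ e₁ ∧ v ∈ e₂

/-- A perfect matching in `F`: a matching covering every vertex. -/
def IsPerfectMatchingIn (M : Set (Sym2 V)) (F : SimpleGraph V) : Prop :=
  IsMatchingIn M F ∧ ∀ v : V, ∃ e ∈ M, v ∈ e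

/-- A maximum matching in `F`: a matching of maximum cardinality. -/
def IsMaximumMatchingIn (M : Set (Sym2 V)) (F : SimpleGraph V) : Prop :=
  IsMatchingIn M F ∧ ∀ M' : Set (Sym2 V), IsMatchingIn M' F → M'.ncard ≤ M.ncard

/-- A `3`-vertex of `H`: a vertex of degree `3`. -/
def IsThreeVertex (H : SimpleGraph V) (v : V) : Prop := (H.neighborSet v).ncard = 3

/-- A `2`-vertex of `H`: a vertex of degree `2`. -/
def IsTwoVertex (H : SimpleGraph V) (v : V) : Prop := (H.neighborSet v).ncard = 2

/-- An `F`-path in `H`: a (nontrivial) path in `H` whose two end-vertices are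
`3`-vertices of `H`, whose interior vertices are all `2`-vertices of `H`, and
whose two end-edges belong to `F`. -/
structure FPathIn (H F : SimpleGraph V) where
  a : V
  b : V
  walk : H.Walk a b
  isPath : walk.IsPath
  len_pos : 0 < walk.length
  ends_three : IsThreeVertex H a ∧ IsThreeVertex H b
  interior_two : ∀ w ∈ walk.support, w ≠ a → w ≠ b → IsTwoVertex H w
  end_edges : ∀ e ∈ walk.edges, (a ∈ e ∨ b ∈ e) → e ∈ F.edgeSet

/-- The vertices of an `F`-path. -/
def FPathIn.supp {H F : SimpleGraph V} (P : FPathIn H F) : Set V :=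
  {v | v ∈ P.walk.support}

/-- The edges of an `F`-path. -/
def FPathIn.edgeSet {H F : SimpleGraph V} (P : FPathIn H F) : Set (Sym2 V) :=
  {e | e ∈ P.walk.edges}

/-- An `F`-matching of `H`: a collection of pairwise vertex-disjoint `F`-paths
such that every `3`-vertex of `H` lies on (exactly) one of them. -/
def IsFMatching (H F : SimpleGraph V) (Ps : Set (FPathIn H F)) : Prop :=
  (∀ P ∈ Ps, ∀ Q ∈ Ps, P ≠ Q → Disjoint P.supp Q.supp) ∧
  (∀ v : V, IsThreeVertex H v → ∃ P ∈ Ps, v ∈ P.supp)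

/-- The set of edges lying on the paths of an `F`-matching. -/
def FMatchingEdges {H F : SimpleGraph V} (Ps : Set (FPathIn H F)) : Set (Sym2 V) :=
  {e | ∃ P ∈ Ps, e ∈ P.walk.edges}

/-- The `F`-complement of an `F`-matching: the subgraph of `H` induced by the
edges of `H` not lying on the paths of `Ps`. -/
def FComplement {H F : SimpleGraph V} (Ps : Set (FPathIn H F)) : SimpleGraph V :=
  H.deleteEdges (FMatchingEdges Ps)

/-- The number of `3`-vertices of `H` lying on a connected component `c` of `K`. -/
noncomputable def threeCount (H : SimpleGraph V) {K : SimpleGraph V} (c : K.ConnectedComponent) : ℕ :=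
  {v ∈ c.supp | IsThreeVertex H v}.ncard

/-- The graph `K` (an `F`-complement, whose nontrivial components are the
loops) is `3`-even w.r.t. `H`: every component carries an even number of
`3`-vertices of `H`. -/
def IsThreeEvenComplement (H K : SimpleGraph V) : Prop :=
  ∀ c : K.ConnectedComponent, Even (threeCount H c)

/-- A component of `K` is a `3`-odd loop if it carries an odd number of
`3`-vertices of `H`. -/
def Is3OddLoop (H : SimpleGraph V) {K : SimpleGraph V} (c : K.ConnectedComponent) : Prop :=
  Odd (threeCount H c)

/-- The number of odd components (odd cycles, for a `2`-factor) of `F`. -/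
noncomputable def oddCompCount (F : SimpleGraph V) : ℕ :=
  {c : F.ConnectedComponent | Odd c.supp.ncard}.ncard

/-- The number of even components (even cycles, for a `2`-factor) of `F`. -/
noncomputable def evenCompCount (F : SimpleGraph V) : ℕ :=
  {c : F.ConnectedComponent | Even c.supp.ncard}.ncard

/-- The oddness of `G`: the minimum number of odd cycles in a `2`-factor of `G`. -/
noncomputable def oddness (G : SimpleGraph V) : ℕ :=
  sInf {n : ℕ | ∃ F : SimpleGraph V, IsTwoFactor G F ∧ oddCompCount F = n}

/-- `v` lies on an odd component (odd cycle) of `F`. -/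
def OnOddCycle (F : SimpleGraph V) (v : V) : Prop :=
  Odd ((F.connectedComponentMk v).supp.ncard)

/-- A simple `F`-matching: an `F`-matching such that on each of its paths the
only edges lying on odd cycles of `F` are the edges incident to the
end-vertices. -/
def IsSimpleFMatching (H F : SimpleGraph V) (Ps : Set (FPathIn H F)) : Prop :=
  IsFMatching H F Ps ∧
  ∀ P ∈ Ps, ∀ e ∈ P.walk.edges,
    (e ∈ F.edgeSet ∧ ∀ w ∈ e, OnOddCycle F w) → (P.a ∈ e ∨ P.b ∈ e)

/-- The set `C ⊆ V` carries a `Θ`-graph structure in `H`: two distinct vertices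
joined by three internally disjoint paths whose union is exactly the part of
`H` on `C`. -/
def IsThetaOn (H : SimpleGraph V) (C : Set V) : Prop :=
  ∃ a b : V, a ≠ b ∧ ∃ p q r : H.Walk a b,
    p.IsPath ∧ q.IsPath ∧ r.IsPath ∧ p ≠ q ∧ p ≠ r ∧ q ≠ r ∧
    (∀ w ∈ p.support, w ∈ q.support → w = a ∨ w = b) ∧
    (∀ w ∈ p.support, w ∈ r.support → w = a ∨ w = b) ∧
    (∀ w ∈ q.support, w ∈ r.support → w = a ∨ w = b) ∧
    C = {w | w ∈ p.support ∨ w ∈ q.support ∨ w ∈ r.support} ∧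
    (∀ e ∈ H.edgeSet, (∀ w ∈ e, w ∈ C) → e ∈ p.edges ∨ e ∈ q.edges ∨ e ∈ r.edges)

/-- The set `C ⊆ V` carries a kayak-paddle graph structure in `H`: two
vertex-disjoint cycles joined by a path, their union being exactly the part of
`H` on `C`. -/
def IsKayakPaddleOn (H : SimpleGraph V) (C : Set V) : Prop :=
  ∃ a b : V, ∃ (c₁ : H.Walk a a) (c₂ : H.Walk b b) (p : H.Walk a b),
    c₁.IsCycle ∧ c₂.IsCycle ∧ p.IsPath ∧
    (∀ w ∈ c₁.support, w ∉ c₂.support) ∧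
    (∀ w ∈ p.support, w ∈ c₁.support → w = a) ∧
    (∀ w ∈ p.support, w ∈ c₂.support → w = b) ∧
    C = {w | w ∈ c₁.support ∨ w ∈ c₂.support ∨ w ∈ p.support} ∧
    (∀ e ∈ H.edgeSet, (∀ w ∈ e, w ∈ C) → e ∈ c₁.edges ∨ e ∈ c₂.edges ∨ e ∈ p.edges)

/-- The set `C ⊆ V` carries an even cycle of `H` whose vertices and edges are
exactly the part of `H` on `C`. -/
def IsEvenCycleOn (H : SimpleGraph V) (C : Set V) : Prop :=
  ∃ a : V, ∃ W : H.Walk a a, W.IsCycle ∧ Even W.length ∧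
    C = {w | w ∈ W.support} ∧
    (∀ e ∈ H.edgeSet, (∀ w ∈ e, w ∈ C) → e ∈ W.edges)

/-- `Meven` is a perfect matching of the even part `F_even` of the `2`-factor
`F`: a matching of `F` using only edges on even cycles and covering all
vertices of even cycles. -/
def IsPerfectMatchingOfEvenPart (Meven : Set (Sym2 V)) (F : SimpleGraph V) : Prop :=
  IsMatchingIn Meven F ∧
  (∀ e ∈ Meven, ∀ w ∈ e, ¬ OnOddCycle F w) ∧
  (∀ v : V, ¬ OnOddCycle F v → ∃ e ∈ Meven, v ∈ e)

/-- Two odd components `c₁`, `c₂` of `F` are linked in `H_odd = G − M_even`: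
there is a path of `H_odd` from `c₁` to `c₂` all of whose interior vertices
avoid odd cycles of `F` (i.e. are `2`-vertices of `H_odd`). -/
def OddCompLinked (G F : SimpleGraph V) (Meven : Set (Sym2 V))
    (c₁ c₂ : F.ConnectedComponent) : Prop :=
  ∃ u v : V, u ∈ c₁.supp ∧ v ∈ c₂.supp ∧
    ∃ W : (G.deleteEdges Meven).Walk u v, W.IsPath ∧ 0 < W.length ∧
      ∀ w ∈ W.support, w ≠ u → w ≠ v → ¬ OnOddCycle F w

/-- The odd-cycle-incidence graph `K_odd`: vertices are the odd cycles of `F`,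
two of them being adjacent iff they are linked by a path of
`H_odd = G − M_even` with all interior vertices `2`-vertices of `H_odd`
(this is `H_odd` with the edges of `F_odd` contracted and the `2`-vertices
suppressed). -/
def Kodd (G F : SimpleGraph V) (Meven : Set (Sym2 V)) :
    SimpleGraph {c : F.ConnectedComponent // Odd c.supp.ncard} where
  Adj c₁ c₂ := c₁ ≠ c₂ ∧
    (OddCompLinked G F Meven c₁.1 c₂.1 ∨ OddCompLinked G F Meven c₂.1 c₁.1)
  symm := ⟨fun c₁ c₂ h => ⟨h.1.symm, h.2.symm⟩⟩
  loopless := ⟨fun c h => h.1 rfl⟩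

/-- The set of edges of `K` lying on the connected component `c` of `K`. -/
def compEdgeSet (K : SimpleGraph V) (c : K.ConnectedComponent) : Set (Sym2 V) :=
  {e ∈ K.edgeSet | ∃ w, w ∈ e ∧ w ∈ c.supp}

/-- The set `E_Ps` of end-edges of the paths of an `F`-matching `Ps`. -/
def endEdges {H F : SimpleGraph V} (Ps : Set (FPathIn H F)) : Set (Sym2 V) :=
  {e | ∃ P ∈ Ps, e ∈ P.walk.edges ∧ (P.a ∈ e ∨ P.b ∈ e)}

/-- The edge set attached to a vertex of the loop-cycle-incidence graph `B`:
a component of `F − E_Ps`, a loop of the `F`-complement `ℒ`, or a path of `Ps`. -/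
def bEdgeSet (F : SimpleGraph V) {H : SimpleGraph V} (Ps : Set (FPathIn H F)) :
    (F.deleteEdges (endEdges Ps)).ConnectedComponent ⊕
      ((FComplement Ps).ConnectedComponent ⊕ ↥Ps) → Set (Sym2 V)
  | Sum.inl C => compEdgeSet (F.deleteEdges (endEdges Ps)) C
  | Sum.inr (Sum.inl c) => compEdgeSet (FComplement Ps) c
  | Sum.inr (Sum.inr P) => FPathIn.edgeSet P.1

/-- The loop-cycle-incidence graph `B`: a bipartite graph on
`𝒞* ⊕ (ℒ ⊕ Ps)`, where `𝒞*` is the set of components of `F − E_Ps`, `ℒ` the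
set of components (loops) of the `F`-complement and `Ps` the paths of the
`F`-matching; a component of `F − E_Ps` is adjacent to a loop/path iff they
share an edge of `G`. -/
def LoopCycleIncidence (F : SimpleGraph V) {H : SimpleGraph V}
    (Ps : Set (FPathIn H F)) :
    SimpleGraph ((F.deleteEdges (endEdges Ps)).ConnectedComponent ⊕
      ((FComplement Ps).ConnectedComponent ⊕ ↥Ps)) where
  Adj a b := ((a.isLeft ∧ b.isRight) ∨ (a.isRight ∧ b.isLeft)) ∧
    ∃ e, e ∈ bEdgeSet F Ps a ∧ e ∈ bEdgeSet F Ps b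
  symm := by
    constructor
    rintro a b ⟨hs, e, h₁, h₂⟩
    exact ⟨by tauto, e, h₂, h₁⟩
  loopless := by
    constructor
    rintro a ⟨hs, -⟩
    rcases a with a | a <;> simp_all

/-- Remove a set of vertices from a graph (keeping them as isolated vertices):
used to form `B − Ps`. -/
def removeVerts {W : Type*} (B : SimpleGraph W) (S : Set W) : SimpleGraph W where
  Adj a b := B.Adj a b ∧ a ∉ S ∧ b ∉ S
  symm := ⟨fun a b h => ⟨h.1.symm, h.2.2, h.2.1⟩⟩
  loopless := ⟨fun a h => B.loopless.1 a h.1⟩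

/-- The vertices of `B` corresponding to the paths of `Ps`. -/
def PVerts (F : SimpleGraph V) {H : SimpleGraph V} (Ps : Set (FPathIn H F)) :
    Set ((F.deleteEdges (endEdges Ps)).ConnectedComponent ⊕
      ((FComplement Ps).ConnectedComponent ⊕ ↥Ps)) :=
  {x | ∃ P : ↥Ps, x = Sum.inr (Sum.inr P)}

/-- A permutation snark: a snark having a `2`-factor consisting of precisely
two chordless cycles. -/
def IsPermutationSnark (G : SimpleGraph V) : Prop :=
  IsSnark G ∧ ∃ F : SimpleGraph V, IsTwoFactor G F ∧
    Nat.card F.ConnectedComponent = 2 ∧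
    ∀ u v : V, G.Adj u v → ¬ F.Adj u v →
      F.connectedComponentMk u ≠ F.connectedComponentMk v

/-- The graph obtained from `H` (all of whose vertices have degree `2` or `3`)
by suppressing the degree-`2` vertices is `3`-edge-colorable: there is a
`3`-coloring of the edges which is constant through `2`-vertices and proper at
`3`-vertices. -/
def SuppressedThreeEdgeColorable (H : SimpleGraph V) : Prop :=
  ∃ c : Sym2 V → Fin 3,
    (∀ v : V, IsThreeVertex H v →
      ∀ e₁ ∈ H.incidenceSet v, ∀ e₂ ∈ H.incidenceSet v, e₁ ≠ e₂ → c e₁ ≠ c e₂) ∧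
    (∀ v : V, IsTwoVertex H v →
      ∀ e₁ ∈ H.incidenceSet v, ∀ e₂ ∈ H.incidenceSet v, c e₁ = c e₂)

/-- `e_r(G)`: the minimum cardinality of a set of pairwise non-adjacent edges
of `G` whose removal, followed by suppression of the resulting `2`-vertices,
yields a `3`-edge-colorable (cubic) graph. -/
noncomputable def edgeReductionNumber (G : SimpleGraph V) : ℕ :=
  sInf {n : ℕ | ∃ R : Set (Sym2 V), IsMatchingIn R G ∧
    SuppressedThreeEdgeColorable (G.deleteEdges R) ∧ R.ncard = n}


set_option linter.unusedSectionVars false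
set_option maxHeartbeats 1000000

namespace PSnark

attribute [local instance] Classical.propDecidable


lemma zmod4_two_mul_not_odd (x : ZMod 4) : 2 * x ≠ 1 ∧ 2 * x ≠ 3 := by revert x; decide

lemma zmod4_mul_odd {c z : ZMod 4} (hc : c = 1 ∨ c = 3) (hz : z = 1 ∨ z = 3) :
    c * z = z + (c - 1) := by
  rcases hc with rfl | rfl <;> rcases hz with rfl | rfl <;> decide

lemma zmod4_odd_mul_odd_sub_one {c z : ZMod 4} (hc : c = 1 ∨ c = 3) (hz : z = 1 ∨ z = 3) :
    c * z - 1 = (c - 1) + (z - 1) := by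
  rcases hc with rfl | rfl <;> rcases hz with rfl | rfl <;> decide

lemma neg_one_pow_cases (j : ℕ) : ((-1 : ZMod 4)) ^ j = 1 ∨ ((-1 : ZMod 4)) ^ j = 3 := by
  rcases Nat.even_or_odd j with h | h
  · left; exact h.neg_one_pow
  · right; rw [h.neg_one_pow]; decide

lemma neg_one_pow_sq (j : ℕ) : ((-1 : ZMod 4)) ^ j * ((-1 : ZMod 4)) ^ j = 1 := by
  rcases neg_one_pow_cases j with h | h <;> rw [h] <;> decide

lemma altsum_Icc (m : ℕ) :
    (∑ j ∈ Finset.Icc 1 m, ((-1 : ZMod 4)) ^ j) = if Even m then 0 else -1 := by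
  induction m with
  | zero => simp
  | succ k ih =>
    rw [Finset.sum_Icc_succ_top (by omega), ih]
    by_cases h : Even k
    · have h1 : ¬ Even (k+1) := by simp [Nat.even_add_one, h]
      have h2 : Odd (k+1) := Nat.not_even_iff_odd.mp h1
      rw [if_pos h, if_neg h1, h2.neg_one_pow, zero_add]
    · have h1 : Even (k+1) := Nat.even_add_one.mpr h
      rw [if_neg h, if_pos h1, h1.neg_one_pow]
      exact neg_add_cancel 1

lemma zmod4_two_mul_even {m : ℕ} (hm : Even m) : (2 : ZMod 4) * (m : ZMod 4) = 0 := by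
  obtain ⟨t, rfl⟩ := hm
  have : ((t + t : ℕ) : ZMod 4) = 2 * t := by push_cast; ring
  rw [this, ← mul_assoc]
  rw [show (2 : ZMod 4) * 2 = 0 by decide, zero_mul]





variable {V : Type*}

/-- the data of a spanning cycle of a connected component -/
structure CycData (F : SimpleGraph V) (n : ℕ) (f : ℕ → V) : Prop where
  adj : ∀ i, F.Adj (f i) (f (i+1))
  period : ∀ i, f (i + n) = f i
  inj : ∀ i j, i < n → j < n → f i = f j → i = j
  nbhdEq : ∀ i, F.neighborSet (f (i+1)) = {f i, f (i+2)}
  bt : ∀ i, f i ≠ f (i+2)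
  n3 : 3 ≤ n

noncomputable def someNb (F : SimpleGraph V) (v : V) : V :=
  if h : ∃ w, F.Adj v w then h.choose else v

noncomputable def otherNb (F : SimpleGraph V) (u v : V) : V :=
  if h : ∃ w, F.Adj v w ∧ w ≠ u then h.choose else v

noncomputable def cycSeq (F : SimpleGraph V) (b : V) : ℕ → V × V :=
  fun n => Nat.rec (b, someNb F b) (fun _ p => (p.2, otherNb F p.1 p.2)) n

noncomputable def cycF (F : SimpleGraph V) (b : V) (i : ℕ) : V := (cycSeq F b i).1

section build

variable {F : SimpleGraph V} {b : V} [Finite V]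
lemma cycF_zero : cycF F b 0 = b := rfl

lemma cycF_succ (i : ℕ) : cycF F b (i + 1) = (cycSeq F b i).2 := rfl

lemma cycF_two (i : ℕ) :
    cycF F b (i + 2) = otherNb F (cycF F b i) (cycF F b (i+1)) := rfl

variable (hreg : ∀ v : V, (F.neighborSet v).ncard = 2)

include hreg

lemma pair_eq {v a c : V} (hac : a ≠ c) (ha : F.Adj v a) (hc : F.Adj v c) :
    F.neighborSet v = {a, c} := by
  refine (Set.eq_of_subset_of_ncard_le ?_ ?_ (Set.toFinite _)).symm
  · intro x hx
    rcases hx with h | h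
    · subst h; exact ha
    · simp only [Set.mem_singleton_iff] at h; subst h; exact hc
  · rw [hreg v, Set.ncard_pair hac]

lemma someNb_adj (v : V) : F.Adj v (someNb F v) := by
  have h : ∃ w, F.Adj v w := by
    obtain ⟨a, c, hac, hset⟩ := Set.ncard_eq_two.mp (hreg v)
    exact ⟨a, by rw [← SimpleGraph.mem_neighborSet, hset]; exact Set.mem_insert _ _⟩
  rw [someNb, dif_pos h]
  exact h.choose_spec

lemma otherNb_exists (u v : V) : ∃ w, F.Adj v w ∧ w ≠ u := by
  obtain ⟨a, c, hac, hset⟩ := Set.ncard_eq_two.mp (hreg v)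
  have ha : F.Adj v a := by rw [← SimpleGraph.mem_neighborSet, hset]; exact Set.mem_insert _ _
  have hc : F.Adj v c := by
    rw [← SimpleGraph.mem_neighborSet, hset]; exact Set.mem_insert_of_mem _ rfl
  by_cases h : a = u
  · exact ⟨c, hc, by rw [← h]; exact hac.symm⟩
  · exact ⟨a, ha, h⟩

lemma otherNb_adj (u v : V) : F.Adj v (otherNb F u v) := by
  rw [otherNb, dif_pos (otherNb_exists hreg u v)]
  exact (otherNb_exists hreg u v).choose_spec.1

lemma otherNb_ne (u v : V) : otherNb F u v ≠ u := by
  rw [otherNb, dif_pos (otherNb_exists hreg u v)]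
  exact (otherNb_exists hreg u v).choose_spec.2

lemma otherNb_unique {u v w : V} (hw : F.Adj v w) (hwu : w ≠ u) (hu : F.Adj v u) :
    w = otherNb F u v := by
  obtain ⟨a, c, hac, hset⟩ := Set.ncard_eq_two.mp (hreg v)
  have hmem : ∀ {x : V}, F.Adj v x → x = a ∨ x = c := by
    intro x hx
    have := hset ▸ (SimpleGraph.mem_neighborSet F v x).mpr hx
    simpa using this
  have h1 := hmem hw
  have h2 := hmem (otherNb_adj hreg u v)
  have h3 := hmem hu
  have h4 := otherNb_ne hreg u v
  rcases h1 with rfl | rfl <;> rcases h2 with h2 | h2 <;> rcases h3 with h3 | h3 <;>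
    first
      | (exact h2.symm)
      | (exact absurd h3.symm hwu)
      | (exact absurd (h2.trans h3.symm) h4)
      | (exact absurd h2 (by rw [h3] at h4 ⊢; exact h4))

lemma cycF_adj (i : ℕ) : F.Adj (cycF F b i) (cycF F b (i + 1)) := by
  cases i with
  | zero => exact someNb_adj hreg b
  | succ k =>
    rw [cycF_two]
    exact otherNb_adj hreg _ _

lemma cycF_bt (i : ℕ) : cycF F b (i + 2) ≠ cycF F b i := by
  rw [cycF_two]
  exact otherNb_ne hreg _ _

lemma cycSeq_back {j k : ℕ} (h : cycSeq F b (j+1) = cycSeq F b (k+1)) :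
    cycSeq F b j = cycSeq F b k := by
  have hj1 : (cycSeq F b j).2 = (cycSeq F b k).2 := congrArg Prod.fst h
  have key : ∀ m : ℕ, (cycSeq F b m).1 = otherNb F (cycF F b (m+2)) (cycF F b (m+1)) := by
    intro m
    refine otherNb_unique hreg ?_ ?_ ?_
    · exact (cycF_adj hreg m).symm
    · exact fun hmm => (cycF_bt hreg m) hmm.symm
    · exact cycF_adj hreg (m+1)
  have h2 : cycF F b (j+2) = cycF F b (k+2) := congrArg Prod.snd h
  have h1 : cycF F b (j+1) = cycF F b (k+1) := hj1
  have hfst := key j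
  rw [h1, h2, ← key k] at hfst
  exact Prod.ext hfst hj1

lemma cycSeq_back_iter {i j : ℕ} (hij : i ≤ j) (h : cycSeq F b i = cycSeq F b j) :
    cycSeq F b 0 = cycSeq F b (j - i) := by
  induction i generalizing j with
  | zero => simpa using h
  | succ k ih =>
    cases j with
    | zero => omega
    | succ m =>
      have h' := cycSeq_back hreg h
      have := ih (by omega) h'
      simpa using this

lemma cycSeq_exists_period : ∃ m, 0 < m ∧ cycSeq F b m = cycSeq F b 0 := by
  obtain ⟨i, j, hne, heq⟩ := Finite.exists_ne_map_eq_of_infinite (cycSeq F b)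
  rcases Nat.lt_or_ge i j with h | h
  · exact ⟨j - i, by omega, (cycSeq_back_iter hreg (le_of_lt h) heq).symm⟩
  · have h' : j < i := by omega
    exact ⟨i - j, by omega, (cycSeq_back_iter hreg (le_of_lt h') heq.symm).symm⟩


end build

section main

variable {F : SimpleGraph V} [Finite V] {b : V}
variable (hreg : ∀ v : V, (F.neighborSet v).ncard = 2)

/-- the minimal period of the walk around `b`'s component -/
noncomputable def cycN (F : SimpleGraph V) (b : V) : ℕ :=
  if h : ∃ m, 0 < m ∧ cycSeq F b m = cycSeq F b 0 then Nat.find h else 0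

lemma cycSeq_succ_eq (k : ℕ) :
    cycSeq F b (k+1) = ((cycSeq F b k).2, otherNb F (cycSeq F b k).1 (cycSeq F b k).2) := rfl

include hreg

lemma cycSeq_period : 0 < cycN F b ∧ cycSeq F b (cycN F b) = cycSeq F b 0 ∧
    ∀ m, 0 < m → m < cycN F b → cycSeq F b m ≠ cycSeq F b 0 := by
  have h := cycSeq_exists_period (b := b) hreg
  rw [cycN, dif_pos h]
  refine ⟨(Nat.find_spec h).1, (Nat.find_spec h).2, ?_⟩
  intro m hm hlt heq
  exact Nat.find_min h hlt ⟨hm, heq⟩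

lemma cycSeq_add_period (i : ℕ) : cycSeq F b (i + cycN F b) = cycSeq F b i := by
  induction i with
  | zero => simpa using (cycSeq_period hreg).2.1
  | succ k ih =>
    have e : k + 1 + cycN F b = (k + cycN F b) + 1 := by omega
    rw [e, cycSeq_succ_eq, cycSeq_succ_eq, ih]

lemma cycF_add_period (i : ℕ) : cycF F b (i + cycN F b) = cycF F b i :=
  congrArg Prod.fst (cycSeq_add_period hreg i)

lemma cycF_add_mul_period (i k : ℕ) : cycF F b (i + k * cycN F b) = cycF F b i := by
  induction k with
  | zero => simp
  | succ m ih =>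
    have e : i + (m+1) * cycN F b = (i + m * cycN F b) + cycN F b := by ring
    rw [e, cycF_add_period hreg, ih]

lemma cycF_mod (i : ℕ) : cycF F b (i % cycN F b) = cycF F b i := by
  conv_rhs => rw [show i = i % cycN F b + (i / cycN F b) * cycN F b by
    rw [Nat.mod_add_div']]
  rw [cycF_add_mul_period hreg]

lemma cycN_ge_three : 3 ≤ cycN F b := by
  obtain ⟨hpos, hper, hmin⟩ := cycSeq_period (b := b) hreg
  have hnn : cycF F b (cycN F b) = cycF F b 0 := congrArg Prod.fst hper
  by_contra h
  push_neg at h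
  have h1 : cycN F b = 1 ∨ cycN F b = 2 := by omega
  rcases h1 with h1 | h1
  · rw [h1] at hnn
    exact (cycF_adj hreg 0).ne' hnn
  · rw [h1] at hnn
    exact cycF_bt hreg 0 hnn

lemma cycF_nbhd (i : ℕ) :
    F.neighborSet (cycF F b (i+1)) = {cycF F b i, cycF F b (i+2)} :=
  pair_eq hreg (fun h => cycF_bt hreg i h.symm) (cycF_adj hreg i).symm (cycF_adj hreg (i+1))

lemma cycF_reflect {J c : ℕ} (h0 : cycF F b J = cycF F b c)
    (h1 : cycF F b (J+1) = cycF F b (c-1)) :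
    ∀ t, t + 1 ≤ c - J → cycF F b (J + t) = cycF F b (c - t)
      ∧ cycF F b (J + t + 1) = cycF F b (c - t - 1) := by
  intro t
  induction t with
  | zero => intro _; exact ⟨by simpa using h0, by simpa using h1⟩
  | succ u ih =>
    intro hu
    obtain ⟨ih0, ih1⟩ := ih (by omega)
    constructor
    · have e : J + (u+1) = (J + u) + 1 := by omega
      have e2 : c - (u+1) = c - u - 1 := by omega
      rw [e, e2, ih1]
    · have hstep : cycF F b (J + (u+1) + 1) = otherNb F (cycF F b (J+u)) (cycF F b (J+u+1)) := by
        have e : J + (u+1) + 1 = (J + u) + 2 := by omega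
        rw [e, cycF_two]
      have target : cycF F b (c - (u+1) - 1) = otherNb F (cycF F b (J+u)) (cycF F b (J+u+1)) := by
        rw [ih0, ih1]
        refine otherNb_unique hreg ?_ ?_ ?_
        · have ha := (cycF_adj (b := b) hreg (c - u - 2)).symm
          have e1 : c - u - 2 + 1 = c - u - 1 := by omega
          have e2 : c - (u+1) - 1 = c - u - 2 := by omega
          rw [e1] at ha
          rw [e2]
          exact ha
        · have hb := cycF_bt (b := b) hreg (c - u - 2)
          have e3 : c - u - 2 + 2 = c - u := by omega
          rw [e3] at hb
          have e2 : c - (u+1) - 1 = c - u - 2 := by omega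
          rw [e2]
          exact fun hx => hb (by rw [hx])
        · have ha := cycF_adj (b := b) hreg (c - u - 1)
          have e4 : c - u - 1 + 1 = c - u := by omega
          rw [e4] at ha
          exact ha
      rw [hstep, target]

lemma cycF_inj : ∀ i j, i < cycN F b → j < cycN F b → cycF F b i = cycF F b j → i = j := by
  obtain ⟨hpos, hper, hmin⟩ := cycSeq_period (b := b) hreg
  have n3 := cycN_ge_three (b := b) hreg
  set n := cycN F b with hn
  have key : ∀ i j, i < j → j < n → cycF F b i ≠ cycF F b j := by
    intro i j hij hj heq
    set I := i + n with hI
    set J := j + n with hJ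
    have hIJ : cycF F b I = cycF F b J := by
      rw [hI, hJ, cycF_add_period hreg, cycF_add_period hreg]; exact heq
    have hnbJ : F.neighborSet (cycF F b J) = {cycF F b (J-1), cycF F b (J+1)} := by
      have := cycF_nbhd (b := b) hreg (J - 1)
      have e1 : J - 1 + 1 = J := by omega
      have e2 : J - 1 + 2 = J + 1 := by omega
      rw [e1, e2] at this
      exact this
    have hnbI : F.neighborSet (cycF F b I) = {cycF F b (I-1), cycF F b (I+1)} := by
      have := cycF_nbhd (b := b) hreg (I - 1)
      have e1 : I - 1 + 1 = I := by omega
      have e2 : I - 1 + 2 = I + 1 := by omega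
      rw [e1, e2] at this
      exact this
    have hmem : cycF F b (J+1) ∈ F.neighborSet (cycF F b I) := by
      rw [hIJ, hnbJ]
      exact Set.mem_insert_of_mem _ rfl
    rw [hnbI] at hmem
    rcases hmem with hcase | hcase
    · -- f (J+1) = f (I-1) : reflection
      set K := 2 * (J + n) + 2 with hK
      set c := I + K * n with hc
      have h0 : cycF F b J = cycF F b c := by
        rw [hc, cycF_add_mul_period hreg]
        exact hIJ.symm
      have h1 : cycF F b (J+1) = cycF F b (c-1) := by
        have e : c - 1 = (I - 1) + K * n := by
          have : 1 ≤ I := by omega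
          omega
        rw [e, cycF_add_mul_period hreg]
        exact hcase
      have hbig : n + 3 ≤ c - J := by
        have h3 : 0 < n := by omega
        have : K * n ≥ 2 * (J + n) := by nlinarith
        omega
      rcases Nat.even_or_odd (c - J) with ⟨t, ht⟩ | ⟨t, ht⟩
      · have hrt := cycF_reflect hreg h0 h1 t (by omega)
        have e1 : c - t = J + t := by omega
        have e2 : c - t - 1 = J + t - 1 := by omega
        rw [e2, e1] at hrt
        have hb := cycF_bt (b := b) hreg (J + t - 1)
        have e3 : J + t - 1 + 2 = J + t + 1 := by omega
        rw [e3] at hb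
        exact hb hrt.2
      · have hrt := cycF_reflect hreg h0 h1 t (by omega)
        have e1 : c - t = J + t + 1 := by omega
        rw [e1] at hrt
        exact (cycF_adj (b := b) hreg (J + t)).ne hrt.1
    · -- f (J+1) = f (I+1) : pair equality, contradicting minimality
      have hpair : cycSeq F b I = cycSeq F b J := by
        refine Prod.ext hIJ ?_
        show cycF F b (I+1) = cycF F b (J+1)
        exact hcase.symm
      have := cycSeq_back_iter hreg (by omega : I ≤ J) hpair
      exact hmin (J - I) (by omega) (by omega) this.symm
  intro i j hi hj heq
  rcases Nat.lt_trichotomy i j with h | h | h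
  · exact absurd heq (key i j h hj)
  · exact h
  · exact absurd heq.symm (key j i h hi)

lemma cycF_reachable (i : ℕ) : F.Reachable b (cycF F b i) := by
  induction i with
  | zero => exact Reachable.refl b
  | succ k ih => exact ih.trans (cycF_adj hreg k).reachable

lemma cycF_nbhd' (i : ℕ) :
    F.neighborSet (cycF F b i) = {cycF F b (i + cycN F b - 1), cycF F b (i+1)} := by
  have hpos : 0 < cycN F b := (cycSeq_period (b := b) hreg).1
  have e0 : cycF F b i = cycF F b ((i + cycN F b - 1) + 1) := by
    have e : (i + cycN F b - 1) + 1 = i + cycN F b := by omega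
    rw [e, cycF_add_period hreg]
  have e2 : (i + cycN F b - 1) + 2 = (i + 1) + cycN F b := by omega
  rw [e0]
  rw [cycF_nbhd hreg (i + cycN F b - 1), e2, cycF_add_period hreg]

lemma cycF_surj_of_reachable {v : V} (h : F.Reachable b v) : ∃ i, cycF F b i = v := by
  have key : ∀ (u w : V) (_ : F.Walk u w), (∃ i, cycF F b i = u) → ∃ i, cycF F b i = w := by
    intro u w p
    induction p with
    | nil => exact id
    | @cons a x w hax q ih =>
      rintro ⟨i, rfl⟩
      refine ih ?_
      have hx : x ∈ F.neighborSet (cycF F b i) := hax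
      rw [cycF_nbhd' hreg] at hx
      rcases hx with hx | hx
      · exact ⟨i + cycN F b - 1, hx.symm⟩
      · exact ⟨i + 1, hx.symm⟩
  exact key b v h.some ⟨0, rfl⟩

lemma cycF_image_supp (v : V) :
    (∃ i, i < cycN F b ∧ cycF F b i = v) ↔
      F.connectedComponentMk v = F.connectedComponentMk b := by
  constructor
  · rintro ⟨i, _, rfl⟩
    exact ConnectedComponent.eq.mpr (cycF_reachable hreg i).symm
  · intro h
    obtain ⟨i, hi⟩ := cycF_surj_of_reachable hreg (ConnectedComponent.eq.mp h).symm
    have hpos : 0 < cycN F b := (cycSeq_period (b := b) hreg).1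
    exact ⟨i % cycN F b, Nat.mod_lt _ hpos, by rw [cycF_mod hreg]; exact hi⟩

lemma cycN_eq_ncard_supp :
    cycN F b = (F.connectedComponentMk b).supp.ncard := by
  have hinj : Set.InjOn (cycF F b) ↑(Finset.range (cycN F b)) := by
    intro i hi j hj hij
    exact cycF_inj hreg i j (by simpa using hi) (by simpa using hj) hij
  have himg : (F.connectedComponentMk b).supp
      = cycF F b '' ↑(Finset.range (cycN F b)) := by
    ext v
    rw [SimpleGraph.ConnectedComponent.mem_supp_iff]
    constructor
    · intro h
      obtain ⟨i, hi, he⟩ := (cycF_image_supp hreg v).mpr h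
      exact ⟨i, by simpa using hi, he⟩
    · rintro ⟨i, hi, rfl⟩
      exact (cycF_image_supp hreg _).mp ⟨i, by simpa using hi, rfl⟩
  rw [himg, Set.ncard_image_of_injOn hinj, Set.ncard_coe_finset, Finset.card_range]

lemma exists_cycData : CycData F (cycN F b) (cycF F b) :=
  ⟨cycF_adj hreg, cycF_add_period hreg, cycF_inj hreg,
   cycF_nbhd hreg, fun i => (cycF_bt (b := b) hreg i).symm, cycN_ge_three hreg⟩

end main

namespace CycData

variable {F : SimpleGraph V} {n : ℕ} {f : ℕ → V}

lemma add_mul_period (cd : CycData F n f) (i k : ℕ) : f (i + k * n) = f i := by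
  induction k with
  | zero => simp
  | succ m ih =>
    have e : i + (m+1) * n = (i + m * n) + n := by ring
    rw [e, cd.period, ih]

lemma mod (cd : CycData F n f) (i : ℕ) : f (i % n) = f i := by
  conv_rhs => rw [show i = i % n + (i / n) * n by rw [Nat.mod_add_div']]
  rw [cd.add_mul_period]

lemma npos (cd : CycData F n f) : 0 < n := by have := cd.n3; omega

end CycData

noncomputable def posOf (n : ℕ) (f : ℕ → V) (v : V) : ℕ :=
  if h : ∃ i, i < n ∧ f i = v then h.choose else 0

lemma posOf_f {F : SimpleGraph V} {n : ℕ} {f : ℕ → V} (cd : CycData F n f)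
    {i : ℕ} (hi : i < n) : posOf n f (f i) = i := by
  have h : ∃ j, j < n ∧ f j = f i := ⟨i, hi, rfl⟩
  rw [posOf, dif_pos h]
  exact cd.inj _ _ h.choose_spec.1 hi h.choose_spec.2

lemma posOf_mem {n : ℕ} {f : ℕ → V} {v : V} (h : ∃ i, i < n ∧ f i = v) :
    posOf n f v < n ∧ f (posOf n f v) = v := by
  rw [posOf, dif_pos h]
  exact ⟨h.choose_spec.1, h.choose_spec.2⟩

def eidx (n : ℕ) (p : V → ℕ) (u v : V) : ℕ :=
  if p v = p u + 1 then p u else if p u = p v + 1 then p v else n - 1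

lemma eidx_comm (n : ℕ) (p : V → ℕ) (u v : V) : eidx n p u v = eidx n p v u := by
  unfold eidx
  split_ifs <;> omega

noncomputable def xseq (μf : ℕ → ZMod 4) : ℕ → ZMod 4 :=
  fun i => Nat.rec 0 (fun k xk => -xk - μf (k+1)) i

lemma xseq_zero (μf : ℕ → ZMod 4) : xseq μf 0 = 0 := rfl

lemma xseq_succ (μf : ℕ → ZMod 4) (i : ℕ) : xseq μf (i+1) = -xseq μf i - μf (i+1) := rfl

lemma xseq_closed (μf : ℕ → ZMod 4) (i : ℕ) :
    xseq μf i = -((-1 : ZMod 4))^i * ∑ j ∈ Finset.Icc 1 i, ((-1 : ZMod 4))^j * μf j := by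
  induction i with
  | zero => simp [xseq_zero]
  | succ k ih =>
    rw [xseq_succ, ih, Finset.sum_Icc_succ_top (by omega)]
    have h' : ((-1 : ZMod 4))^k * ((-1 : ZMod 4))^k = 1 := neg_one_pow_sq k
    rw [pow_succ]
    linear_combination (μf (k+1)) * h'

theorem master [Fintype V] (G F : SimpleGraph V) (hFG : F ≤ G) (τ : V → V)
    (hτG : ∀ v, G.Adj v (τ v)) (hτF : ∀ v, ¬ F.Adj v (τ v)) (hτι : ∀ v, τ (τ v) = v)
    (hGnb : ∀ v, G.neighborSet v = insert (τ v) (F.neighborSet v))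
    (n : ℕ) (f₁ f₂ : ℕ → V) (h₁ : CycData F n f₁) (h₂ : CycData F n f₂)
    (hcover : ∀ v : V, (∃ i, i < n ∧ f₁ i = v) ∨ (∃ i, i < n ∧ f₂ i = v))
    (hdisj : ∀ i j, f₁ i ≠ f₂ j)
    (μ : V → ZMod 4) (hμτ : ∀ v, μ (τ v) = μ v) (hμ0 : ∀ v, μ v ≠ 0)
    (hμodd₁ : ∀ i, 1 ≤ i → i < n → μ (f₁ i) = 1 ∨ μ (f₁ i) = 3)
    (hμodd₂ : ∀ i, 1 ≤ i → i < n → μ (f₂ i) = 1 ∨ μ (f₂ i) = 3)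
    (hB₁ : ∑ j ∈ Finset.Icc 1 n, ((-1 : ZMod 4))^j * μ (f₁ j) = 0)
    (hB₂ : ∑ j ∈ Finset.Icc 1 n, ((-1 : ZMod 4))^j * μ (f₂ j) = 0) :
    ∃ σ : Sym2 V → ZMod 4 × ZMod 2, IsProperAbelianColoring G σ := by
  classical
  have hn3 := h₁.n3
  have hnpos : 0 < n := by omega
  set x₁ : ℕ → ZMod 4 := xseq (fun j => μ (f₁ j)) with hx₁
  set x₂ : ℕ → ZMod 4 := xseq (fun j => μ (f₂ j)) with hx₂
  set p₁ : V → ℕ := posOf n f₁ with hp₁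
  set p₂ : V → ℕ := posOf n f₂ with hp₂
  set S1 : V → Prop := fun v => ∃ i, i < n ∧ f₁ i = v with hS1
  set g : V → V → ZMod 4 × ZMod 2 := fun u v =>
    if τ u = v then (μ u, 0)
    else if F.Adj u v then
      (if S1 u ∨ S1 v then x₁ (eidx n p₁ u v) else x₂ (eidx n p₂ u v), 1)
    else 0 with hg
  have gsymm : ∀ u v : V, g u v = g v u := by
    intro u v
    rw [hg]
    beta_reduce
    by_cases h : τ u = v
    · have h' : τ v = u := by rw [← h, hτι]
      rw [if_pos h, if_pos h', ← h, hμτ]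
    · have h' : τ v ≠ u := fun hh => h (by rw [← hh, hτι])
      rw [if_neg h, if_neg h']
      by_cases hadj : F.Adj u v
      · rw [if_pos hadj, if_pos hadj.symm, eidx_comm n p₁, eidx_comm n p₂]
        have hor : (S1 u ∨ S1 v) ↔ (S1 v ∨ S1 u) := or_comm
        by_cases hs : S1 u ∨ S1 v
        · rw [if_pos hs, if_pos (hor.mp hs)]
        · rw [if_neg hs, if_neg (fun hh => hs (hor.mpr hh))]
      · rw [if_neg hadj, if_neg (fun hh => hadj hh.symm)]
  set σ : Sym2 V → ZMod 4 × ZMod 2 := Sym2.lift ⟨g, gsymm⟩ with hσ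
  have σ_mk : ∀ u v : V, σ s(u, v) = g u v := fun u v => Sym2.lift_mk ⟨g, gsymm⟩ u v
  have evalM : ∀ v : V, σ s(v, τ v) = (μ v, 0) := by
    intro v
    rw [σ_mk, hg]
    beta_reduce
    rw [if_pos rfl]
  -- generic evaluation on cycle edges
  have evalC : ∀ (f : ℕ → V) (cd : CycData F n f) (xx : ℕ → ZMod 4) (p : V → ℕ),
      p = posOf n f →
      (∀ i : ℕ,
        (if S1 (f i) ∨ S1 (f (i+1)) then x₁ (eidx n p₁ (f i) (f (i+1)))
          else x₂ (eidx n p₂ (f i) (f (i+1))))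
          = xx (eidx n p (f i) (f (i+1)))) →
      ∀ i : ℕ, σ s(f i, f (i+1)) = (xx (i % n), 1) := by
    intro f cd xx p hp hbranch i
    have hadj : F.Adj (f i) (f (i+1)) := cd.adj i
    have hne : τ (f i) ≠ f (i+1) := by
      intro hh
      exact hτF (f i) (by rw [hh]; exact hadj)
    rw [σ_mk, hg]
    beta_reduce
    rw [if_neg hne, if_pos hadj, hbranch i]
    have hpu : p (f i) = i % n := by
      rw [hp, ← cd.mod i]
      exact posOf_f cd (Nat.mod_lt _ hnpos)
    have hpv : p (f (i+1)) = (i+1) % n := by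
      rw [hp, ← cd.mod (i+1)]
      exact posOf_f cd (Nat.mod_lt _ hnpos)
    have himod : i % n < n := Nat.mod_lt _ hnpos
    congr 2
    rw [eidx, hpu, hpv]
    by_cases hlast : i % n = n - 1
    · have hi1 : (i+1) % n = 0 := by
        rw [Nat.add_mod, hlast]
        have h1 : (1 : ℕ) % n = 1 := Nat.mod_eq_of_lt (by omega)
        have e : n - 1 + 1 % n = n := by omega
        rw [e, Nat.mod_self]
      rw [hi1]
      rw [if_neg (by omega), if_neg (by omega), hlast]
    · have hi1 : (i+1) % n = i % n + 1 := by
        rw [Nat.add_mod]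
        have h1 : (1 : ℕ) % n = 1 := Nat.mod_eq_of_lt (by omega)
        rw [h1]
        exact Nat.mod_eq_of_lt (by omega)
      rw [hi1, if_pos rfl]
  have heval₁ : ∀ i : ℕ, σ s(f₁ i, f₁ (i+1)) = (x₁ (i % n), 1) := by
    refine evalC f₁ h₁ x₁ p₁ hp₁ ?_
    intro i
    have hs : S1 (f₁ i) ∨ S1 (f₁ (i+1)) :=
      Or.inl ⟨i % n, Nat.mod_lt _ hnpos, h₁.mod i⟩
    rw [if_pos hs]
  have heval₂ : ∀ i : ℕ, σ s(f₂ i, f₂ (i+1)) = (x₂ (i % n), 1) := by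
    refine evalC f₂ h₂ x₂ p₂ hp₂ ?_
    intro i
    have hs : ¬ (S1 (f₂ i) ∨ S1 (f₂ (i+1))) := by
      rintro (⟨j, _, hj⟩ | ⟨j, _, hj⟩)
      · exact hdisj j i hj
      · exact hdisj j (i+1) hj
    rw [if_neg hs]
  -- per-cycle x-sequence facts
  have xfacts : ∀ (f : ℕ → V) (cd : CycData F n f),
      (∀ i, 1 ≤ i → i < n → μ (f i) = 1 ∨ μ (f i) = 3) →
      ((∑ j ∈ Finset.Icc 1 n, ((-1 : ZMod 4))^j * μ (f j)) = 0) →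
      (∀ p, p < n →
        xseq (fun j => μ (f j)) ((p + n - 1) % n) + xseq (fun j => μ (f j)) p = -μ (f p))
      ∧ (∀ p, p < n →
        xseq (fun j => μ (f j)) ((p + n - 1) % n) ≠ xseq (fun j => μ (f j)) p) := by
    intro f cd hμodd hB
    set xx := xseq (fun j => μ (f j)) with hxx
    have hclose : xx n = 0 := by
      rw [hxx, xseq_closed, hB, mul_zero]
    have hf0 : f n = f 0 := by simpa using cd.period 0
    have hlastx : xx (n-1) = -μ (f 0) := by
      have hsucc : xx ((n-1)+1) = -xx (n-1) - μ (f ((n-1)+1)) := xseq_succ _ _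
      have e : n - 1 + 1 = n := by omega
      rw [e, hclose, hf0] at hsucc
      linear_combination hsucc
    have hident : ∀ p, p < n → xx ((p + n - 1) % n) + xx p = -μ (f p) := by
      intro p hp
      by_cases hp0 : p = 0
      · subst hp0
        have e : (0 + n - 1) % n = n - 1 := by
          simp only [Nat.zero_add]
          exact Nat.mod_eq_of_lt (by omega)
        rw [e, hlastx]
        have hz : xx 0 = 0 := rfl
        rw [hz, add_zero]
      · have e : (p + n - 1) % n = p - 1 := by
          have e2 : p + n - 1 = (p-1) + n := by omega
          rw [e2, Nat.add_mod_right]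
          exact Nat.mod_eq_of_lt (by omega)
        rw [e]
        have hsucc : xx ((p-1)+1) = -xx (p-1) - μ (f ((p-1)+1)) := xseq_succ _ _
        have e3 : p - 1 + 1 = p := by omega
        rw [e3] at hsucc
        rw [hsucc]
        ring
    refine ⟨hident, ?_⟩
    intro p hp heq
    have hid := hident p hp
    rw [heq] at hid
    by_cases hp0 : p = 0
    · subst hp0
      have hz : xx 0 = 0 := rfl
      rw [hz] at heq
      have e : (0 + n - 1) % n = n - 1 := by
        simp only [Nat.zero_add]
        exact Nat.mod_eq_of_lt (by omega)
      rw [e, hlastx] at heq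
      exact hμ0 (f 0) (by linear_combination -heq)
    · have hodd := hμodd p (by omega) hp
      have h2 : 2 * xx p = -μ (f p) := by linear_combination hid
      rcases hodd with ho | ho
      · rw [ho, show (-1 : ZMod 4) = 3 by decide] at h2
        exact (zmod4_two_mul_not_odd (xx p)).2 h2
      · rw [ho, show (-3 : ZMod 4) = 1 by decide] at h2
        exact (zmod4_two_mul_not_odd (xx p)).1 h2
  obtain ⟨hid₁, hne₁⟩ := xfacts f₁ h₁ hμodd₁ hB₁
  obtain ⟨hid₂, hne₂⟩ := xfacts f₂ h₂ hμodd₂ hB₂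
  -- local structure at every vertex
  have locals : ∀ v : V, ∃ a c : V, a ≠ c ∧ F.neighborSet v = {a, c} ∧ τ v ≠ a ∧ τ v ≠ c ∧
      σ s(v, a) ≠ σ s(v, c) ∧ (σ s(v, a)).2 = 1 ∧ (σ s(v, c)).2 = 1 ∧
      (σ s(v, a)).1 + (σ s(v, c)).1 + μ v = 0 := by
    have gen : ∀ (f : ℕ → V) (cd : CycData F n f) (xx : ℕ → ZMod 4),
        (∀ i, σ s(f i, f (i+1)) = (xx (i % n), 1)) →
        (∀ p, p < n → xx ((p + n - 1) % n) + xx p = -μ (f p)) →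
        (∀ p, p < n → xx ((p + n - 1) % n) ≠ xx p) →
        ∀ p, p < n → ∃ a c : V, a ≠ c ∧ F.neighborSet (f p) = {a, c} ∧
          τ (f p) ≠ a ∧ τ (f p) ≠ c ∧
          σ s(f p, a) ≠ σ s(f p, c) ∧ (σ s(f p, a)).2 = 1 ∧ (σ s(f p, c)).2 = 1 ∧
          (σ s(f p, a)).1 + (σ s(f p, c)).1 + μ (f p) = 0 := by
      intro f cd xx heval hid hnex p hp
      have e1 : p + n - 1 + 1 = p + n := by omega
      have e2 : p + n - 1 + 2 = (p + 1) + n := by omega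
      have hv : f (p + n) = f p := cd.period p
      have hEA : σ s(f p, f (p + n - 1)) = (xx ((p + n - 1) % n), 1) := by
        have h0 := heval (p + n - 1)
        rw [e1, hv] at h0
        rw [Sym2.eq_swap]
        exact h0
      have hEC : σ s(f p, f (p + 1)) = (xx (p % n), 1) := heval p
      rw [Nat.mod_eq_of_lt hp] at hEC
      have hadjA : F.Adj (f p) (f (p + n - 1)) := by
        have h0 := cd.adj (p + n - 1)
        rw [e1, hv] at h0
        exact h0.symm
      have hadjC : F.Adj (f p) (f (p + 1)) := cd.adj p
      refine ⟨f (p + n - 1), f (p + 1), ?_, ?_, ?_, ?_, ?_, ?_, ?_, ?_⟩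
      · have hb := cd.bt (p + n - 1)
        rw [e2, cd.period] at hb
        exact hb
      · have hnb := cd.nbhdEq (p + n - 1)
        rw [e1, e2, cd.period, cd.period] at hnb
        exact hnb
      · intro h
        exact hτF (f p) (by rw [h]; exact hadjA)
      · intro h
        exact hτF (f p) (by rw [h]; exact hadjC)
      · rw [hEA, hEC]
        intro h
        exact hnex p hp (congrArg Prod.fst h)
      · rw [hEA]
      · rw [hEC]
      · rw [hEA, hEC]
        have := hid p hp
        simp only
        linear_combination this
    intro v
    rcases hcover v with ⟨p, hp, rfl⟩ | ⟨p, hp, rfl⟩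
    · exact gen f₁ h₁ x₁ heval₁ hid₁ hne₁ p hp
    · exact gen f₂ h₂ x₂ heval₂ hid₂ hne₂ p hp
  refine ⟨σ, ?_, ?_, ?_⟩
  · -- nonzero on edges
    intro e he
    induction e using Sym2.ind with
    | _ u v =>
      rw [SimpleGraph.mem_edgeSet] at he
      rw [σ_mk, hg]
      beta_reduce
      by_cases h : τ u = v
      · rw [if_pos h]
        intro h0
        exact hμ0 u (congrArg Prod.fst h0)
      · have hF : F.Adj u v := by
          have hv : v ∈ G.neighborSet u := he
          rw [hGnb u] at hv
          rcases Set.mem_insert_iff.mp hv with hv | hv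
          · exact absurd hv.symm h
          · exact hv
        rw [if_neg h, if_pos hF]
        intro h0
        have h1 := congrArg Prod.snd h0
        exact one_ne_zero h1
  · -- adjacent edges get distinct colors
    intro e1 he1 e2 he2 hadj
    obtain ⟨hne, w, hw1, hw2⟩ := hadj
    obtain ⟨a, hspa⟩ : ∃ a, s(w, a) = e1 := ⟨Sym2.Mem.other hw1, Sym2.other_spec hw1⟩
    obtain ⟨c, hspc⟩ : ∃ c, s(w, c) = e2 := ⟨Sym2.Mem.other hw2, Sym2.other_spec hw2⟩
    have hGa : G.Adj w a := by rw [← hspa] at he1; exact (SimpleGraph.mem_edgeSet G).mp he1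
    have hGc : G.Adj w c := by rw [← hspc] at he2; exact (SimpleGraph.mem_edgeSet G).mp he2
    have hac : a ≠ c := by
      intro h
      apply hne
      rw [← hspa, ← hspc, h]
    obtain ⟨A, C, hAC, hnb, hτA, hτC, hσne, hsA, hsC, _⟩ := locals w
    have hma : a = τ w ∨ a = A ∨ a = C := by
      have hmm : a ∈ G.neighborSet w := hGa
      rw [hGnb w, hnb] at hmm
      rcases Set.mem_insert_iff.mp hmm with h | h
      · exact Or.inl h
      · rcases Set.mem_insert_iff.mp h with h | h
        · exact Or.inr (Or.inl h)
        · exact Or.inr (Or.inr h)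
    have hmc : c = τ w ∨ c = A ∨ c = C := by
      have hmm : c ∈ G.neighborSet w := hGc
      rw [hGnb w, hnb] at hmm
      rcases Set.mem_insert_iff.mp hmm with h | h
      · exact Or.inl h
      · rcases Set.mem_insert_iff.mp h with h | h
        · exact Or.inr (Or.inl h)
        · exact Or.inr (Or.inr h)
    rw [← hspa, ← hspc]
    have hMsnd : (σ s(w, τ w)).2 = 0 := by rw [evalM w]
    have hdiff : ∀ y : V, (σ s(w, y)).2 = 1 → σ s(w, τ w) ≠ σ s(w, y) := by
      intro y hy h
      rw [h, hy] at hMsnd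
      exact one_ne_zero hMsnd
    rcases hma with h1 | h1 | h1 <;> rcases hmc with h2 | h2 | h2 <;>
      first
        | exact absurd (h1.trans h2.symm) hac
        | (rw [h1, h2]
           first
             | exact hdiff A hsA
             | exact hdiff C hsC
             | exact (hdiff A hsA).symm
             | exact (hdiff C hsC).symm
             | exact hσne
             | exact hσne.symm)
  · -- vertex sums vanish
    intro v
    obtain ⟨A, C, hAC, hnb, hτA, hτC, hσne, hsA, hsC, hsum⟩ := locals v
    have hFA : F.Adj v A := by
      rw [← SimpleGraph.mem_neighborSet, hnb]; exact Set.mem_insert _ _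
    have hFC : F.Adj v C := by
      rw [← SimpleGraph.mem_neighborSet, hnb]; exact Set.mem_insert_of_mem _ rfl
    have hinc : G.incidenceSet v = {s(v, τ v), s(v, A), s(v, C)} := by
      ext e
      constructor
      · rintro ⟨he, hv⟩
        obtain ⟨y, hy⟩ : ∃ y, s(v, y) = e := ⟨Sym2.Mem.other hv, Sym2.other_spec hv⟩
        have hGy : G.Adj v y := by rw [← hy] at he; exact (SimpleGraph.mem_edgeSet G).mp he
        have hmm : y ∈ G.neighborSet v := hGy
        rw [hGnb v, hnb] at hmm
        simp only [Set.mem_insert_iff, Set.mem_singleton_iff] at hmm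
        simp only [Set.mem_insert_iff, Set.mem_singleton_iff]
        rcases hmm with h | h | h
        · exact Or.inl (by rw [← hy, h])
        · exact Or.inr (Or.inl (by rw [← hy, h]))
        · exact Or.inr (Or.inr (by rw [← hy, h]))
      · intro h
        simp only [Set.mem_insert_iff, Set.mem_singleton_iff] at h
        rcases h with h | h | h
        · rw [h]
          exact ⟨(SimpleGraph.mem_edgeSet G).mpr (hτG v), Sym2.mem_mk_left _ _⟩
        · rw [h]
          exact ⟨(SimpleGraph.mem_edgeSet G).mpr (hFG hFA), Sym2.mem_mk_left _ _⟩
        · rw [h]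
          exact ⟨(SimpleGraph.mem_edgeSet G).mpr (hFG hFC), Sym2.mem_mk_left _ _⟩
    have d12 : s(v, τ v) ≠ s(v, A) := fun h => hτA (Sym2.congr_right.mp h)
    have d13 : s(v, τ v) ≠ s(v, C) := fun h => hτC (Sym2.congr_right.mp h)
    have d23 : s(v, A) ≠ s(v, C) := fun h => hAC (Sym2.congr_right.mp h)
    rw [hinc]
    have hsetfin : ({s(v, τ v), s(v, A), s(v, C)} : Set (Sym2 V)) =
        (↑({s(v, τ v), s(v, A), s(v, C)} : Finset (Sym2 V))) := by simp
    rw [hsetfin, finsum_mem_coe_finset]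
    rw [Finset.sum_insert (by simp [d12, d13]), Finset.sum_insert (by simp [d23]),
      Finset.sum_singleton]
    rw [evalM v]
    rw [Prod.ext_iff]
    constructor
    · simp only [Prod.fst_add, Prod.fst_zero]
      linear_combination hsum
    · simp only [Prod.snd_add, Prod.snd_zero, hsA, hsC]
      decide

end PSnark

-- STATEMENT 9
theorem statement9 {V : Type*} [Fintype V] (G : SimpleGraph V)
    (hG : IsPermutationSnark G) :
    ∃ σ : Sym2 V → ZMod 4 × ZMod 2, IsProperAbelianColoring G σ := by
  classical
  open PSnark in
  obtain ⟨⟨hconn, hbrid, hcub, hncol⟩, F, ⟨hFG, hreg⟩, hcomp2, hchord⟩ := hG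
  -- the matching involution τ
  have hτex : ∀ v : V, ∃ w, G.Adj v w ∧ ¬ F.Adj v w := by
    intro v
    by_contra h
    push_neg at h
    have hsub : G.neighborSet v ⊆ F.neighborSet v := fun w hw => h w hw
    have hle := Set.ncard_le_ncard hsub (Set.toFinite _)
    rw [hcub v, hreg v] at hle
    omega
  set τ : V → V := fun v => (hτex v).choose with hτ
  have hτG : ∀ v, G.Adj v (τ v) := fun v => (hτex v).choose_spec.1
  have hτF : ∀ v, ¬ F.Adj v (τ v) := fun v => (hτex v).choose_spec.2
  have hGnb : ∀ v, G.neighborSet v = insert (τ v) (F.neighborSet v) := by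
    intro v
    refine (Set.eq_of_subset_of_ncard_le ?_ ?_ (Set.toFinite _)).symm
    · intro w hw
      rcases Set.mem_insert_iff.mp hw with h | h
      · rw [h]; exact hτG v
      · exact hFG h
    · have hni : τ v ∉ F.neighborSet v := fun hm => hτF v hm
      rw [hcub v, Set.ncard_insert_of_notMem hni (Set.toFinite _), hreg v]
  have hτuniq : ∀ v w, G.Adj v w → ¬ F.Adj v w → w = τ v := by
    intro v w hGw hFw
    have hmm : w ∈ G.neighborSet v := hGw
    rw [hGnb v] at hmm
    rcases Set.mem_insert_iff.mp hmm with h | h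
    · exact h
    · exact absurd h hFw
  have hτι : ∀ v, τ (τ v) = v := fun v =>
    (hτuniq (τ v) v (hτG v).symm (fun h => hτF v h.symm)).symm
  have hτinj : Function.Injective τ := Function.Involutive.injective hτι
  -- the two components
  obtain ⟨cA, cB, hccne, hccuniv⟩ := Nat.card_eq_two_iff.mp hcomp2
  have hcases : ∀ c : F.ConnectedComponent, c = cA ∨ c = cB := by
    intro c
    have hmm : c ∈ ({cA, cB} : Set _) := by rw [hccuniv]; trivial
    simpa using hmm
  obtain ⟨b₁, hb₁⟩ := cA.exists_rep
  set b₂ := τ b₁ with hb₂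
  have hmkne : ∀ v, F.connectedComponentMk (τ v) ≠ F.connectedComponentMk v := by
    intro v h
    exact hchord v (τ v) (hτG v) (hτF v) h.symm
  have hb12 : F.connectedComponentMk b₂ ≠ F.connectedComponentMk b₁ := hmkne b₁
  have hcover2 : ∀ v, F.connectedComponentMk v = F.connectedComponentMk b₁
      ∨ F.connectedComponentMk v = F.connectedComponentMk b₂ := by
    intro v
    rcases hcases (F.connectedComponentMk v) with h | h <;>
      rcases hcases (F.connectedComponentMk b₁) with h1 | h1 <;>
      rcases hcases (F.connectedComponentMk b₂) with h2 | h2 <;>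
      first
        | exact absurd (h2.trans h1.symm) hb12
        | (left; rw [h]; exact h1.symm)
        | (right; rw [h]; exact h2.symm)
  -- the two cycles
  set n := cycN F b₁ with hn
  set f₁ := cycF F b₁ with hf₁
  set f₂ := cycF F b₂ with hf₂
  have cd₁ : CycData F n f₁ := exists_cycData hreg
  have himage₁ : ∀ v, (∃ i, i < n ∧ f₁ i = v) ↔
      F.connectedComponentMk v = F.connectedComponentMk b₁ := fun v => cycF_image_supp hreg v
  have hsupp_img : (F.connectedComponentMk b₂).supp = τ '' (F.connectedComponentMk b₁).supp := by
    ext w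
    simp only [Set.mem_image, SimpleGraph.ConnectedComponent.mem_supp_iff]
    constructor
    · intro h
      refine ⟨τ w, ?_, hτι w⟩
      rcases hcover2 (τ w) with h' | h'
      · exact h'
      · exact absurd (h'.trans h.symm) (hmkne w)
    · rintro ⟨u, hu, rfl⟩
      rcases hcover2 (τ u) with h' | h'
      · exact absurd (h'.trans hu.symm) (hmkne u)
      · exact h'
  have hn2 : cycN F b₂ = n := by
    rw [cycN_eq_ncard_supp hreg, hsupp_img, Set.ncard_image_of_injective _ hτinj, hn,
      cycN_eq_ncard_supp hreg]
  have cd₂ : CycData F n f₂ := by rw [← hn2]; exact exists_cycData hreg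
  have himage₂ : ∀ v, (∃ i, i < n ∧ f₂ i = v) ↔
      F.connectedComponentMk v = F.connectedComponentMk b₂ := by
    intro v
    rw [← hn2]
    exact cycF_image_supp hreg v
  have hnpos : 0 < n := cd₁.npos
  have hn3 : 3 ≤ n := cd₁.n3
  have hcover : ∀ v : V, (∃ i, i < n ∧ f₁ i = v) ∨ (∃ i, i < n ∧ f₂ i = v) := by
    intro v
    rcases hcover2 v with h | h
    · exact Or.inl ((himage₁ v).mpr h)
    · exact Or.inr ((himage₂ v).mpr h)
  have hdisj : ∀ i j, f₁ i ≠ f₂ j := by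
    intro i j h
    have h1 : F.connectedComponentMk (f₁ i) = F.connectedComponentMk b₁ :=
      (himage₁ _).mp ⟨i % n, Nat.mod_lt _ hnpos, cd₁.mod i⟩
    have h2 : F.connectedComponentMk (f₂ j) = F.connectedComponentMk b₂ :=
      (himage₂ _).mp ⟨j % n, Nat.mod_lt _ hnpos, cd₂.mod j⟩
    rw [h] at h1
    exact hb12 (h2.symm.trans h1)
  have hf₁0 : f₁ 0 = b₁ := rfl
  have hf₂0 : f₂ 0 = b₂ := rfl
  have hf₁n : f₁ n = b₁ := by
    have h := cd₁.period 0
    simpa [hf₁0] using h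
  have hf₂n : f₂ n = b₂ := by
    have h := cd₂.period 0
    simpa [hf₂0] using h
  rcases Nat.even_or_odd n with hpar | hpar
  · -- even case : constant μ = 1
    refine master G F hFG τ hτG hτF hτι hGnb n f₁ f₂ cd₁ cd₂ hcover hdisj
      (fun _ => 1) (fun _ => rfl) (fun _ => (by decide : (1 : ZMod 4) ≠ 0)) (fun _ _ _ => Or.inl rfl)
      (fun _ _ _ => Or.inl rfl) ?_ ?_
    · simp only [mul_one]
      rw [altsum_Icc, if_pos hpar]
    · simp only [mul_one]
      rw [altsum_Icc, if_pos hpar]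
  · -- odd case
    set aa : V → ZMod 4 := fun u => if (n-1) % 4 = 0 ∧ u = f₁ 1 then 3 else 1 with haa
    set ν : V → ZMod 4 := fun u => (-1 : ZMod 4)^(posOf n f₁ u) * aa u with hν
    set μ : V → ZMod 4 := fun v =>
      if v = b₁ ∨ v = b₂ then 2
      else if ∃ i, i < n ∧ f₁ i = v then ν v else ν (τ v) with hμ
    have haa13 : ∀ u, aa u = 1 ∨ aa u = 3 := by
      intro u
      rw [haa]
      beta_reduce
      split_ifs
      · exact Or.inr rfl
      · exact Or.inl rfl
    have hν13 : ∀ u, ν u = 1 ∨ ν u = 3 := by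
      intro u
      rw [hν]
      beta_reduce
      rcases neg_one_pow_cases (posOf n f₁ u) with h | h <;>
        rcases haa13 u with h2 | h2 <;> rw [h, h2] <;> decide
    have hS1τ : ∀ v, (∃ i, i < n ∧ f₁ i = τ v) ↔ ¬ (∃ i, i < n ∧ f₁ i = v) := by
      intro v
      constructor
      · intro h hv
        exact hmkne v (((himage₁ _).mp h).trans ((himage₁ _).mp hv).symm)
      · intro hv
        apply (himage₁ _).mpr
        rcases hcover2 (τ v) with h | h
        · exact h
        · exfalso
          rcases hcover2 v with h' | h'
          · exact hv ((himage₁ v).mpr h')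
          · exact hmkne v (h.trans h'.symm)
    have hf1ne : ∀ j, 1 ≤ j → j < n → f₁ j ≠ b₁ ∧ f₁ j ≠ b₂ := by
      intro j h1 h2
      constructor
      · intro h
        have := cd₁.inj j 0 h2 hnpos (h.trans hf₁0.symm)
        omega
      · intro h
        exact hdisj j 0 (h.trans hf₂0.symm)
    have hf2ne : ∀ j, 1 ≤ j → j < n →
        f₂ j ≠ b₁ ∧ f₂ j ≠ b₂ ∧ ¬ (∃ i, i < n ∧ f₁ i = f₂ j) := by
      intro j h1 h2
      refine ⟨?_, ?_, ?_⟩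
      · intro h
        exact hdisj 0 j (hf₁0.trans h.symm)
      · intro h
        have := cd₂.inj j 0 h2 hnpos (h.trans hf₂0.symm)
        omega
      · rintro ⟨i, hi, he⟩
        exact hdisj i j he
    have hμb₁ : μ b₁ = 2 := by
      rw [hμ]
      beta_reduce
      rw [if_pos (Or.inl rfl)]
    have hμb₂ : μ b₂ = 2 := by
      rw [hμ]
      beta_reduce
      rw [if_pos (Or.inr rfl)]
    have hμf₁ : ∀ j, 1 ≤ j → j < n → μ (f₁ j) = (-1 : ZMod 4)^j * aa (f₁ j) := by
      intro j h1 h2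
      obtain ⟨e1, e2⟩ := hf1ne j h1 h2
      rw [hμ]
      beta_reduce
      rw [if_neg (fun h => h.elim e1 e2), if_pos ⟨j, h2, rfl⟩, hν]
      beta_reduce
      rw [posOf_f cd₁ h2]
    have hμf₂ : ∀ j, 1 ≤ j → j < n → μ (f₂ j) = ν (τ (f₂ j)) := by
      intro j h1 h2
      obtain ⟨e1, e2, e3⟩ := hf2ne j h1 h2
      rw [hμ]
      beta_reduce
      rw [if_neg (fun h => h.elim e1 e2), if_neg e3]
    have hμτ : ∀ v, μ (τ v) = μ v := by
      intro v
      by_cases hv1 : v = b₁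
      · rw [hv1, ← hb₂, hμb₂, hμb₁]
      by_cases hv2 : v = b₂
      · have hτb : τ b₂ = b₁ := by rw [hb₂, hτι]
        rw [hv2, hτb, hμb₁, hμb₂]
      · have hτvb₁ : τ v ≠ b₁ := by
          intro h
          apply hv2
          rw [hb₂, ← h, hτι]
        have hτvb₂ : τ v ≠ b₂ := fun h => hv1 (hτinj (h.trans hb₂))
        rw [hμ]
        beta_reduce
        rw [if_neg (show ¬(τ v = b₁ ∨ τ v = b₂) from fun h => h.elim hτvb₁ hτvb₂),
          if_neg (show ¬(v = b₁ ∨ v = b₂) from fun h => h.elim hv1 hv2)]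
        by_cases hs : ∃ i, i < n ∧ f₁ i = v
        · rw [if_neg ((not_iff_not.mpr (hS1τ v)).mpr (not_not_intro hs)), if_pos hs, hτι]
        · rw [if_pos ((hS1τ v).mpr hs), if_neg hs]
    have hμ0 : ∀ v, μ v ≠ 0 := by
      intro v
      rw [hμ]
      beta_reduce
      split_ifs
      · decide
      · rcases hν13 v with h | h <;> rw [h] <;> decide
      · rcases hν13 (τ v) with h | h <;> rw [h] <;> decide
    have hμodd₁ : ∀ i, 1 ≤ i → i < n → μ (f₁ i) = 1 ∨ μ (f₁ i) = 3 := by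
      intro i h1 h2
      rw [hμf₁ i h1 h2]
      rcases neg_one_pow_cases i with h | h <;>
        rcases haa13 (f₁ i) with h2' | h2' <;> rw [h, h2'] <;> decide
    have hμodd₂ : ∀ i, 1 ≤ i → i < n → μ (f₂ i) = 1 ∨ μ (f₂ i) = 3 := by
      intro i h1 h2
      rw [hμf₂ i h1 h2]
      exact hν13 _
    have hnmod : (n-1) % 4 = 0 ∨ (n-1) % 4 = 2 := by
      have := Nat.odd_iff.mp hpar
      omega
    have hcast : ((n - 1 : ℕ) : ZMod 4) = if (n-1) % 4 = 0 then 0 else 2 := by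
      have hc := (ZMod.natCast_mod (n-1) 4).symm
      rcases hnmod with h | h
      · rw [if_pos h, hc, h, Nat.cast_zero]
      · rw [if_neg (by omega), hc, h]
        rfl
    have hEvenn1 : Even (n - 1) := by
      have := Nat.odd_iff.mp hpar
      refine Nat.even_iff.mpr (by omega)
    have hmain : (∑ j ∈ Finset.Icc 1 (n-1), aa (f₁ j)) = 2 := by
      have hterm : ∀ j ∈ Finset.Icc 1 (n-1),
          aa (f₁ j) = if (n-1) % 4 = 0 ∧ j = 1 then 3 else 1 := by
        intro j hj
        rw [Finset.mem_Icc] at hj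
        rw [haa]
        beta_reduce
        by_cases hc : (n-1) % 4 = 0
        · by_cases hj1 : j = 1
          · rw [hj1, if_pos ⟨hc, rfl⟩, if_pos ⟨hc, rfl⟩]
          · rw [if_neg, if_neg (fun h => hj1 h.2)]
            rintro ⟨-, hf⟩
            exact hj1 (cd₁.inj j 1 (by omega) (by omega) hf)
        · rw [if_neg (fun h => hc h.1), if_neg (fun h => hc h.1)]
      rw [Finset.sum_congr rfl hterm]
      by_cases hc : (n-1) % 4 = 0
      · simp only [hc, true_and]
        have hsplit : ∀ j : ℕ, (if j = 1 then (3 : ZMod 4) else 1)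
            = (if j = 1 then (2 : ZMod 4) else 0) + 1 := by
          intro j
          split_ifs <;> decide
        simp only [hsplit]
        rw [Finset.sum_add_distrib, Finset.sum_ite_eq' (Finset.Icc 1 (n-1)) 1 (fun _ => (2 : ZMod 4)),
          if_pos (Finset.mem_Icc.mpr ⟨le_refl 1, by omega⟩), Finset.sum_const, Nat.card_Icc,
          nsmul_eq_mul, mul_one]
        have e : n - 1 + 1 - 1 = n - 1 := by omega
        rw [e, hcast, if_pos hc, add_zero]
      · simp only [hc, false_and, if_false]
        rw [Finset.sum_const, Nat.card_Icc, nsmul_eq_mul, mul_one]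
        have e : n - 1 + 1 - 1 = n - 1 := by omega
        rw [e, hcast, if_neg hc]
    have hIccsplit : ∀ h : ℕ → ZMod 4,
        ∑ j ∈ Finset.Icc 1 n, h j = (∑ j ∈ Finset.Icc 1 (n-1), h j) + h n := by
      intro h
      have e : n = (n - 1) + 1 := by omega
      conv_lhs => rw [e]
      rw [Finset.sum_Icc_succ_top (by omega), ← e]
    have hpow : (-1 : ZMod 4)^n = 3 := by
      rw [hpar.neg_one_pow]
      decide
    have hB₁ : ∑ j ∈ Finset.Icc 1 n, (-1 : ZMod 4)^j * μ (f₁ j) = 0 := by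
      rw [hIccsplit]
      have hc : ∀ j ∈ Finset.Icc 1 (n-1), (-1 : ZMod 4)^j * μ (f₁ j) = aa (f₁ j) := by
        intro j hj
        rw [Finset.mem_Icc] at hj
        rw [hμf₁ j (by omega) (by omega), ← mul_assoc, neg_one_pow_sq j, one_mul]
      rw [Finset.sum_congr rfl hc, hmain, hf₁n, hμb₁, hpow]
      decide
    -- reindexing data for the second cycle
    set q : ℕ → ℕ := fun j => posOf n f₁ (τ (f₂ j)) with hq_def
    set q' : ℕ → ℕ := fun j => posOf n f₂ (τ (f₁ j)) with hq'_def
    have hq : ∀ j, 1 ≤ j → j < n → (1 ≤ q j ∧ q j < n ∧ f₁ (q j) = τ (f₂ j)) := by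
      intro j h1 h2
      have hS : ∃ i, i < n ∧ f₁ i = τ (f₂ j) := (hS1τ _).mpr (hf2ne j h1 h2).2.2
      obtain ⟨hlt, heq⟩ := posOf_mem hS
      have hlt2 : q j < n := hlt
      have heq2 : f₁ (q j) = τ (f₂ j) := heq
      refine ⟨?_, hlt2, heq2⟩
      by_contra h0
      have hq0 : q j = 0 := by omega
      rw [hq0, hf₁0] at heq2
      have hval : f₂ j = b₂ := by rw [hb₂, heq2, hτι]
      exact (hf2ne j h1 h2).2.1 hval
    have hq' : ∀ j, 1 ≤ j → j < n → (1 ≤ q' j ∧ q' j < n ∧ f₂ (q' j) = τ (f₁ j)) := by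
      intro j h1 h2
      have hS : ∃ i, i < n ∧ f₂ i = τ (f₁ j) := by
        apply (himage₂ _).mpr
        rcases hcover2 (τ (f₁ j)) with h | h
        · exfalso
          have hfj : F.connectedComponentMk (f₁ j) = F.connectedComponentMk b₁ :=
            (himage₁ _).mp ⟨j, h2, rfl⟩
          exact hmkne (f₁ j) (h.trans hfj.symm)
        · exact h
      obtain ⟨hlt, heq⟩ := posOf_mem hS
      have hlt2 : q' j < n := hlt
      have heq2 : f₂ (q' j) = τ (f₁ j) := heq
      refine ⟨?_, hlt2, heq2⟩
      by_contra h0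
      have hq0 : q' j = 0 := by omega
      rw [hq0, hf₂0, hb₂] at heq2
      exact (hf1ne j h1 h2).1 (hτinj heq2).symm
    have hqq' : ∀ j, 1 ≤ j → j < n → q' (q j) = j := by
      intro j h1 h2
      obtain ⟨ha, hb, hc⟩ := hq j h1 h2
      show posOf n f₂ (τ (f₁ (q j))) = j
      rw [hc, hτι]
      exact posOf_f cd₂ h2
    have hq'q : ∀ j, 1 ≤ j → j < n → q (q' j) = j := by
      intro j h1 h2
      obtain ⟨ha, hb, hc⟩ := hq' j h1 h2
      show posOf n f₁ (τ (f₂ (q' j))) = j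
      rw [hc, hτι]
      exact posOf_f cd₁ h2
    have hν_eval : ∀ j, 1 ≤ j → j < n →
        ν (τ (f₂ j)) = (-1 : ZMod 4)^(q j) * aa (f₁ (q j)) := by
      intro j h1 h2
      obtain ⟨-, -, hc⟩ := hq j h1 h2
      rw [hν]
      beta_reduce
      rw [show posOf n f₁ (τ (f₂ j)) = q j from rfl, ← hc]
    have hB₂ : ∑ j ∈ Finset.Icc 1 n, (-1 : ZMod 4)^j * μ (f₂ j) = 0 := by
      rw [hIccsplit]
      have hterm2 : ∀ j ∈ Finset.Icc 1 (n-1), (-1 : ZMod 4)^j * μ (f₂ j)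
          = aa (f₁ (q j)) + (((-1 : ZMod 4))^j - 1) + (((-1 : ZMod 4))^(q j) - 1) := by
        intro j hj
        rw [Finset.mem_Icc] at hj
        have h1 : 1 ≤ j := by omega
        have h2 : j < n := by omega
        rw [hμf₂ j h1 h2, hν_eval j h1 h2, ← mul_assoc]
        have hsj := neg_one_pow_cases j
        have hsq := neg_one_pow_cases (q j)
        have hz := haa13 (f₁ (q j))
        have hprod : (-1 : ZMod 4)^j * (-1 : ZMod 4)^(q j) = 1
            ∨ (-1 : ZMod 4)^j * (-1 : ZMod 4)^(q j) = 3 := by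
          rcases hsj with h | h <;> rcases hsq with h' | h' <;> rw [h, h'] <;> decide
        rw [zmod4_mul_odd hprod hz, zmod4_odd_mul_odd_sub_one hsj hsq]
        ring
      rw [Finset.sum_congr rfl hterm2, Finset.sum_add_distrib, Finset.sum_add_distrib]
      have hmemq : ∀ j ∈ Finset.Icc 1 (n-1), q j ∈ Finset.Icc 1 (n-1) := by
        intro j hj
        rw [Finset.mem_Icc] at hj ⊢
        obtain ⟨ha, hb, -⟩ := hq j (by omega) (by omega)
        omega
      have hmemq' : ∀ j ∈ Finset.Icc 1 (n-1), q' j ∈ Finset.Icc 1 (n-1) := by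
        intro j hj
        rw [Finset.mem_Icc] at hj ⊢
        obtain ⟨ha, hb, -⟩ := hq' j (by omega) (by omega)
        omega
      have hli : ∀ j ∈ Finset.Icc 1 (n-1), q' (q j) = j := by
        intro j hj
        rw [Finset.mem_Icc] at hj
        exact hqq' j (by omega) (by omega)
      have hri : ∀ j ∈ Finset.Icc 1 (n-1), q (q' j) = j := by
        intro j hj
        rw [Finset.mem_Icc] at hj
        exact hq'q j (by omega) (by omega)
      have hre1 : ∑ j ∈ Finset.Icc 1 (n-1), aa (f₁ (q j))
          = ∑ j ∈ Finset.Icc 1 (n-1), aa (f₁ j) :=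
        Finset.sum_nbij' q q' hmemq hmemq' hli hri (fun a _ => rfl)
      have hre2 : ∑ j ∈ Finset.Icc 1 (n-1), (((-1 : ZMod 4))^(q j) - 1)
          = ∑ j ∈ Finset.Icc 1 (n-1), (((-1 : ZMod 4))^j - 1) :=
        Finset.sum_nbij' q q' hmemq hmemq' hli hri (fun a _ => rfl)
      have hSig : ∑ j ∈ Finset.Icc 1 (n-1), (((-1 : ZMod 4))^j - 1)
          = - ((n - 1 : ℕ) : ZMod 4) := by
        rw [Finset.sum_sub_distrib, altsum_Icc, if_pos hEvenn1, Finset.sum_const,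
          Nat.card_Icc, nsmul_eq_mul, mul_one]
        have e : n - 1 + 1 - 1 = n - 1 := by omega
        rw [e, zero_sub]
      rw [hre1, hre2, hSig, hmain, hf₂n, hμb₂, hpow]
      have h2c := zmod4_two_mul_even hEvenn1
      have h8 : (8 : ZMod 4) = 0 := by decide
      linear_combination (-1 : ZMod 4) * h2c + h8
    exact master G F hFG τ hτG hτF hτι hGnb n f₁ f₂ cd₁ cd₂ hcover hdisj μ hμτ hμ0
      hμodd₁ hμodd₂ hB₁ hB₂
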